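/- arXiv:1005.3290 — 4 statements merged into one kernel-verified Lean document; each statement's English description precedes it below -/
import Mathlib

section
/- Consider on [t₀,T] the linear boundary value problem dz₁/dt = C_ε z₁ + Q_ε p₁ with z₁(T) + p₁(T) = ℓ₁, and dp₁/dt = −C_ε' p₁ + S_ε z₁ with p₁(t₀) = ε Q̃ z₁(t₀), where C_ε, Q_ε, S_ε are continuous matrix-valued functions with Q_ε(t) ≥ 0 and S_ε(t) > 0 for all t, ε > 0, and Q̃ ≥ 0 symmetric. Then for ℓ₁ = 0 the only solution is z₁ ≡ 0, p₁ ≡ 0. -/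
open Matrix

private lemma psd_quad_nonneg {r : ℕ} {M : Matrix (Fin r) (Fin r) ℝ} (h : M.PosSemidef)
    (v : Fin r → ℝ) : 0 ≤ M.mulVec v ⬝ᵥ v := by
  rw [dotProduct_comm]; simpa using h.dotProduct_mulVec_nonneg v

private lemma pd_quad_zero {r : ℕ} {M : Matrix (Fin r) (Fin r) ℝ} (h : M.PosDef)
    (v : Fin r → ℝ) (hv : M.mulVec v ⬝ᵥ v = 0) : v = 0 := by
  by_contra hne
  have h2 := h.dotProduct_mulVec_pos hne
  rw [dotProduct_comm] at hv
  simp only [star_trivial] at h2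
  rw [hv] at h2
  exact lt_irrefl 0 h2

/-- uniqueness for the homogeneous two-point boundary value problem
`dz₁/dt = C_ε z₁ + Q_ε p₁`, `dp₁/dt = −C_ε' p₁ + S_ε z₁`, `z₁(T)+p₁(T)=0`,
`p₁(t₀) = ε Q̃ z₁(t₀)`: the only solution is `z₁ ≡ 0`, `p₁ ≡ 0`. -/
theorem stmt4 {r : ℕ} (t₀ T : ℝ) (hT : t₀ < T) (ε : ℝ) (hε : 0 < ε)
    (Cε Qε Sε : ℝ → Matrix (Fin r) (Fin r) ℝ)
    (hCc : ContinuousOn Cε (Set.Icc t₀ T))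
    (hQc : ContinuousOn Qε (Set.Icc t₀ T))
    (hSc : ContinuousOn Sε (Set.Icc t₀ T))
    (hQpsd : ∀ t ∈ Set.Icc t₀ T, (Qε t).PosSemidef)
    (hSpd : ∀ t ∈ Set.Icc t₀ T, (Sε t).PosDef)
    (Qt : Matrix (Fin r) (Fin r) ℝ) (hQt : Qt.PosSemidef)
    (z₁ p₁ : ℝ → Fin r → ℝ)
    (hz : ∀ t ∈ Set.Icc t₀ T,
      HasDerivAt z₁ ((Cε t).mulVec (z₁ t) + (Qε t).mulVec (p₁ t)) t)
    (hp : ∀ t ∈ Set.Icc t₀ T,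
      HasDerivAt p₁ (-((Cε t)ᵀ.mulVec (p₁ t)) + (Sε t).mulVec (z₁ t)) t)
    (hbT : z₁ T + p₁ T = 0)
    (hb0 : p₁ t₀ = ε • Qt.mulVec (z₁ t₀)) :
    ∀ t ∈ Set.Icc t₀ T, z₁ t = 0 ∧ p₁ t = 0 := by
  set I := Set.Icc t₀ T with hI
  have ht₀I : t₀ ∈ I := ⟨le_refl _, hT.le⟩
  have hTI : T ∈ I := ⟨hT.le, le_refl _⟩
  set φ : ℝ → ℝ := fun t => p₁ t ⬝ᵥ z₁ t with hφ
  set g : ℝ → ℝ := fun t => (Sε t).mulVec (z₁ t) ⬝ᵥ z₁ t + (Qε t).mulVec (p₁ t) ⬝ᵥ p₁ t with hg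
  -- derivative of φ
  have hφder : ∀ t ∈ I, HasDerivAt φ (g t) t := by
    intro t ht
    have hzc := hasDerivAt_pi.mp (hz t ht)
    have hpc := hasDerivAt_pi.mp (hp t ht)
    have hsum : HasDerivAt (fun s => ∑ i, p₁ s i * z₁ s i)
        (∑ i, ((-((Cε t)ᵀ.mulVec (p₁ t)) + (Sε t).mulVec (z₁ t)) i * z₁ t i +
          p₁ t i * ((Cε t).mulVec (z₁ t) + (Qε t).mulVec (p₁ t)) i)) t :=
      HasDerivAt.fun_sum fun i _ => (hpc i).mul (hzc i)
    have heq : (∑ i, ((-((Cε t)ᵀ.mulVec (p₁ t)) + (Sε t).mulVec (z₁ t)) i * z₁ t i +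
          p₁ t i * ((Cε t).mulVec (z₁ t) + (Qε t).mulVec (p₁ t)) i)) = g t := by
      rw [Finset.sum_add_distrib]
      have h1 : (∑ i, (-((Cε t)ᵀ.mulVec (p₁ t)) + (Sε t).mulVec (z₁ t)) i * z₁ t i)
          = (-((Cε t)ᵀ.mulVec (p₁ t)) + (Sε t).mulVec (z₁ t)) ⬝ᵥ z₁ t := rfl
      have h2 : (∑ i, p₁ t i * ((Cε t).mulVec (z₁ t) + (Qε t).mulVec (p₁ t)) i)
          = p₁ t ⬝ᵥ ((Cε t).mulVec (z₁ t) + (Qε t).mulVec (p₁ t)) := rfl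
      rw [h1, h2, add_dotProduct, neg_dotProduct, dotProduct_add,
        mulVec_transpose, ← dotProduct_mulVec,
        dotProduct_comm (p₁ t) ((Qε t).mulVec (p₁ t)), hg]
      ring
    exact heq ▸ hsum
  have hgnn : ∀ t ∈ I, 0 ≤ g t := fun t ht =>
    add_nonneg (psd_quad_nonneg (hSpd t ht).posSemidef _) (psd_quad_nonneg (hQpsd t ht) _)
  have hφcont : ContinuousOn φ I := fun t ht => (hφder t ht).continuousAt.continuousWithinAt
  -- φ is monotone on I
  have hmono : MonotoneOn φ I := by
    apply monotoneOn_of_deriv_nonneg (convex_Icc _ _) hφcont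
    · intro x hx
      rw [interior_Icc] at hx
      exact ((hφder x (Set.Ioo_subset_Icc_self hx)).differentiableAt).differentiableWithinAt
    · intro x hx
      rw [interior_Icc] at hx
      rw [(hφder x (Set.Ioo_subset_Icc_self hx)).deriv]
      exact hgnn x (Set.Ioo_subset_Icc_self hx)
  have hφ0 : 0 ≤ φ t₀ := by
    rw [hφ]
    simp only [hb0, smul_dotProduct]
    exact mul_nonneg hε.le (psd_quad_nonneg hQt _)
  have hφT : φ T ≤ 0 := by
    have hpT : p₁ T = -z₁ T := by
      rw [eq_neg_iff_add_eq_zero, add_comm]; exact hbT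
    rw [hφ]
    simp only [hpT, neg_dotProduct]
    rw [neg_nonpos]
    exact Finset.sum_nonneg fun i _ => mul_self_nonneg _
  have hφzero : ∀ t ∈ I, φ t = 0 := by
    intro t ht
    have h1 := hmono ht₀I ht ht.1
    have h2 := hmono ht hTI ht.2
    linarith
  -- z is zero on the interior
  have hzIoo : ∀ t ∈ Set.Ioo t₀ T, z₁ t = 0 := by
    intro t ht
    have htI : t ∈ I := Set.Ioo_subset_Icc_self ht
    have hev : φ =ᶠ[nhds t] fun _ => (0 : ℝ) := by
      filter_upwards [Ioo_mem_nhds ht.1 ht.2] with s hs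
      exact hφzero s (Set.Ioo_subset_Icc_self hs)
    have hder0 : HasDerivAt φ 0 t := (hasDerivAt_const t (0 : ℝ)).congr_of_eventuallyEq hev
    have hgt0 : g t = 0 := (hder0.unique (hφder t htI)).symm
    have hS0 : (Sε t).mulVec (z₁ t) ⬝ᵥ z₁ t = 0 := by
      have h1 := psd_quad_nonneg (hSpd t htI).posSemidef (z₁ t)
      have h2 := psd_quad_nonneg (hQpsd t htI) (p₁ t)
      rw [hg] at hgt0
      simp only at hgt0
      linarith
    exact pd_quad_zero (hSpd t htI) _ hS0
  -- z is zero on I by continuity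
  have hz0 : ∀ t ∈ I, z₁ t = 0 := by
    intro t ht
    have hcl : t ∈ closure (Set.Ioo t₀ T) := by rw [closure_Ioo hT.ne]; exact ht
    have hne : (nhdsWithin t (Set.Ioo t₀ T)).NeBot := mem_closure_iff_nhdsWithin_neBot.mp hcl
    have h1 : Filter.Tendsto z₁ (nhdsWithin t (Set.Ioo t₀ T)) (nhds (z₁ t)) :=
      ((hz t ht).continuousAt.continuousWithinAt).tendsto.mono_left
        (nhdsWithin_mono t (fun x hx => Set.Ioo_subset_Icc_self hx))
    have h2 : Filter.Tendsto z₁ (nhdsWithin t (Set.Ioo t₀ T)) (nhds 0) := by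
      refine Filter.Tendsto.congr' ?_ tendsto_const_nhds
      exact eventually_nhdsWithin_of_forall fun s hs => (hzIoo s hs).symm
    exact tendsto_nhds_unique h1 h2
  -- Gronwall for p
  have hCc' : @ContinuousOn ℝ (Fin r → Fin r → ℝ) _ Pi.topologicalSpace Cε I := hCc
  obtain ⟨M, hM⟩ := isCompact_Icc.exists_bound_of_continuousOn hCc'
  set K : ℝ := (r : ℝ) * max M 0 with hK
  have hKnn : 0 ≤ K := mul_nonneg (Nat.cast_nonneg r) (le_max_right _ _)
  have hbound : ∀ t ∈ I, ∀ v : Fin r → ℝ, ‖(Cε t)ᵀ.mulVec v‖ ≤ K * ‖v‖ := by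
    intro t ht v
    rw [pi_norm_le_iff_of_nonneg (mul_nonneg hKnn (norm_nonneg v))]
    intro i
    have : (Cε t)ᵀ.mulVec v i = ∑ j, (Cε t)ᵀ i j * v j := rfl
    rw [this]
    calc ‖∑ j, (Cε t)ᵀ i j * v j‖ ≤ ∑ j, ‖(Cε t)ᵀ i j * v j‖ := norm_sum_le _ _
      _ ≤ ∑ _j : Fin r, max M 0 * ‖v‖ := by
          apply Finset.sum_le_sum
          intro j _
          rw [norm_mul]
          apply mul_le_mul _ (norm_le_pi_norm v j) (norm_nonneg _) (le_max_right _ _)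
          calc ‖(Cε t)ᵀ i j‖ ≤ ‖(Cε t : Fin r → Fin r → ℝ) j‖ := by
                have hji : (Cε t)ᵀ i j = Cε t j i := rfl
                rw [hji]; exact norm_le_pi_norm _ i
            _ ≤ M := le_trans (norm_le_pi_norm (Cε t : Fin r → Fin r → ℝ) j) (hM t ht)
            _ ≤ max M 0 := le_max_left _ _
      _ = K * ‖v‖ := by simp [hK, Finset.sum_const]; ring
  have hp' : ∀ t ∈ I, HasDerivAt p₁ (-((Cε t)ᵀ.mulVec (p₁ t))) t := by
    intro t ht
    have := hp t ht
    rwa [hz0 t ht, mulVec_zero, add_zero] at this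
  have hpcont : ContinuousOn p₁ I := fun t ht => (hp' t ht).continuousAt.continuousWithinAt
  have hpa : ‖p₁ t₀‖ ≤ 0 := by
    rw [hb0, hz0 t₀ ht₀I, mulVec_zero, smul_zero]
    simp
  have hgron := norm_le_gronwallBound_of_norm_deriv_right_le (f := p₁)
    (f' := fun t => -((Cε t)ᵀ.mulVec (p₁ t))) (δ := 0) (K := K) (ε := 0) (a := t₀) (b := T)
    hpcont
    (fun x hx => ((hp' x (Set.Ico_subset_Icc_self hx)).hasDerivWithinAt))
    hpa
    (fun x hx => by
      rw [norm_neg, add_zero]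
      exact hbound x (Set.Ico_subset_Icc_self hx) _)
  intro t ht
  refine ⟨hz0 t ht, ?_⟩
  have := hgron t ht
  rw [gronwallBound_ε0, zero_mul] at this
  exact norm_le_zero_iff.mp this
end

section
/- Under the hypotheses of the homogeneous uniqueness result (Q_ε ≥ 0, S_ε > 0, Q̃ ≥ 0, ε > 0), any solution (z₁,p₁) of the BVP dz₁/dt = C_ε z₁ + Q_ε p₁, dp₁/dt = −C_ε' p₁ + S_ε z₁, z₁(T)+p₁(T)=0, p₁(t₀)=εQ̃ z₁(t₀) satisfies the energy identity −⟨z₁(T), z₁(T)⟩ − ε⟨Q̃ z₁(t₀), z₁(t₀)⟩ = ∫_{t₀}^{T} [⟨Q_ε p₁, p₁⟩ + ⟨S_ε z₁, z₁⟩] dt. -/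
open Matrix

/-- energy identity for solutions of the homogeneous BVP
`dz₁/dt = C_ε z₁ + Q_ε p₁`, `dp₁/dt = −C_ε' p₁ + S_ε z₁`, `z₁(T)+p₁(T)=0`,
`p₁(t₀)=εQ̃z₁(t₀)`:
`−⟨z₁(T),z₁(T)⟩ − ε⟨Q̃z₁(t₀),z₁(t₀)⟩ = ∫ ⟨Q_ε p₁,p₁⟩ + ⟨S_ε z₁,z₁⟩ dt`. -/
theorem stmt5 {r : ℕ} (t₀ T : ℝ) (hT : t₀ < T) (ε : ℝ) (hε : 0 < ε)
    (Cε Qε Sε : ℝ → Matrix (Fin r) (Fin r) ℝ)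
    (hCc : ContinuousOn Cε (Set.Icc t₀ T))
    (hQc : ContinuousOn Qε (Set.Icc t₀ T))
    (hSc : ContinuousOn Sε (Set.Icc t₀ T))
    (hQpsd : ∀ t ∈ Set.Icc t₀ T, (Qε t).PosSemidef)
    (hSpd : ∀ t ∈ Set.Icc t₀ T, (Sε t).PosDef)
    (Qt : Matrix (Fin r) (Fin r) ℝ) (hQt : Qt.PosSemidef)
    (z₁ p₁ : ℝ → Fin r → ℝ)
    (hz : ∀ t ∈ Set.Icc t₀ T,
      HasDerivAt z₁ ((Cε t).mulVec (z₁ t) + (Qε t).mulVec (p₁ t)) t)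
    (hp : ∀ t ∈ Set.Icc t₀ T,
      HasDerivAt p₁ (-((Cε t)ᵀ.mulVec (p₁ t)) + (Sε t).mulVec (z₁ t)) t)
    (hbT : z₁ T + p₁ T = 0)
    (hb0 : p₁ t₀ = ε • Qt.mulVec (z₁ t₀)) :
    -(z₁ T ⬝ᵥ z₁ T) - ε * (Qt.mulVec (z₁ t₀) ⬝ᵥ z₁ t₀)
      = ∫ t in t₀..T, ((Qε t).mulVec (p₁ t) ⬝ᵥ p₁ t + (Sε t).mulVec (z₁ t) ⬝ᵥ z₁ t) := by
  have hle : t₀ ≤ T := hT.le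
  -- continuity of z₁, p₁ on Icc
  have hzc : ContinuousOn z₁ (Set.Icc t₀ T) := fun t ht =>
    ((hz t ht).continuousAt).continuousWithinAt
  have hpc : ContinuousOn p₁ (Set.Icc t₀ T) := fun t ht =>
    ((hp t ht).continuousAt).continuousWithinAt
  -- continuity of the integrand
  have hcont : ContinuousOn
      (fun t => (Qε t).mulVec (p₁ t) ⬝ᵥ p₁ t + (Sε t).mulVec (z₁ t) ⬝ᵥ z₁ t)
      (Set.Icc t₀ T) := by
    have hquad : ∀ (M : ℝ → Matrix (Fin r) (Fin r) ℝ) (v : ℝ → Fin r → ℝ),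
        ContinuousOn M (Set.Icc t₀ T) → ContinuousOn v (Set.Icc t₀ T) →
        ContinuousOn (fun t => (M t).mulVec (v t) ⬝ᵥ v t) (Set.Icc t₀ T) := by
      intro M v hM hv
      simp only [Matrix.mulVec, dotProduct]
      apply continuousOn_finset_sum
      intro i _
      apply ContinuousOn.mul _ ((continuous_apply i).comp_continuousOn hv)
      apply continuousOn_finset_sum
      intro j _
      exact ((continuous_apply j).comp (continuous_apply i)).comp_continuousOn hM
        |>.mul ((continuous_apply j).comp_continuousOn hv)
    exact (hquad Qε p₁ hQc hpc).add (hquad Sε z₁ hSc hzc)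
  -- derivative of t ↦ p₁ t ⬝ᵥ z₁ t
  have key : ∀ t ∈ Set.Icc t₀ T,
      HasDerivAt (fun t => p₁ t ⬝ᵥ z₁ t)
        ((Qε t).mulVec (p₁ t) ⬝ᵥ p₁ t + (Sε t).mulVec (z₁ t) ⬝ᵥ z₁ t) t := by
    intro t ht
    have hdp := hp t ht
    have hdz := hz t ht
    have h : HasDerivAt (fun t => p₁ t ⬝ᵥ z₁ t)
        ((-((Cε t)ᵀ.mulVec (p₁ t)) + (Sε t).mulVec (z₁ t)) ⬝ᵥ z₁ t
          + p₁ t ⬝ᵥ ((Cε t).mulVec (z₁ t) + (Qε t).mulVec (p₁ t))) t := by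
      simp only [dotProduct]
      have : ∀ i : Fin r, HasDerivAt (fun t => p₁ t i * z₁ t i)
          ((-((Cε t)ᵀ.mulVec (p₁ t)) + (Sε t).mulVec (z₁ t)) i * z₁ t i
            + p₁ t i * ((Cε t).mulVec (z₁ t) + (Qε t).mulVec (p₁ t)) i) t := by
        intro i
        exact (hasDerivAt_pi.1 hdp i).mul (hasDerivAt_pi.1 hdz i)
      have hsum := HasDerivAt.fun_sum (fun i (_ : i ∈ Finset.univ) => this i)
      simpa [Finset.sum_add_distrib] using hsum
    convert h using 1
    rw [add_dotProduct, neg_dotProduct, dotProduct_add,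
      Matrix.mulVec_transpose, ← Matrix.dotProduct_mulVec,
      dotProduct_comm (p₁ t) ((Qε t).mulVec (p₁ t)),
      dotProduct_comm (p₁ t) ((Cε t).mulVec (z₁ t))]
    ring
  -- fundamental theorem of calculus
  have hInt := intervalIntegral.integral_eq_sub_of_hasDerivAt
    (f := fun t => p₁ t ⬝ᵥ z₁ t)
    (fun t ht => key t (by rwa [Set.uIcc_of_le hle] at ht))
    ((hcont.mono (by rw [Set.uIcc_of_le hle])).intervalIntegrable)
  rw [hInt]
  have hpT : p₁ T = -z₁ T := eq_neg_of_add_eq_zero_left (by rw [add_comm]; exact hbT)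
  simp only [hpT, hb0, smul_dotProduct, neg_dotProduct, smul_eq_mul]
  try ring
end

section
/- Let A ∈ ℝ^{r×k}, and let S₁ + C₃'Q₄⁻¹C₃ ∈ ℝ^{r×r} be symmetric, where Q₄ > 0 and the block matrix [[S₁,S₂],[S₂',S₄]] = H'RH is positive semidefinite and A = C₃'Q₄⁻¹C₄ + S₂, W(ε) = εI + S₄ + C₄'Q₄⁻¹C₄, M(ε) = W(ε)⁻¹. Then Q_ε := −(1/ε) A M(ε) A' + I_r + (1/ε)[S₁ + C₃'Q₄⁻¹C₃] is symmetric positive semidefinite for every ε > 0. -/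
open Matrix

lemma psd_smul {n : Type*} [Fintype n] {M : Matrix n n ℝ} (hM : M.PosSemidef) {c : ℝ}
    (hc : 0 ≤ c) : (c • M).PosSemidef := by
  refine ⟨?_, fun x => ?_⟩
  · unfold Matrix.IsHermitian
    rw [conjTranspose_smul, hM.1]
    simp
  · exact (hM.smul hc).2 x

lemma pd_smul {n : Type*} [Fintype n] [DecidableEq n] {M : Matrix n n ℝ} (hM : M.PosDef) {c : ℝ}
    (hc : 0 < c) : (c • M).PosDef := by
  refine ⟨?_, fun x hx => ?_⟩
  · unfold Matrix.IsHermitian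
    rw [conjTranspose_smul, hM.1]
    simp
  · exact (hM.smul hc).2 hx

/-- with `A = C₃'Q₄⁻¹C₄ + S₂`, `W(ε) = εI + S₄ + C₄'Q₄⁻¹C₄`,
`M(ε) = W(ε)⁻¹`, the matrix
`Q_ε = −(1/ε) A M(ε) A' + I + (1/ε)(S₁ + C₃'Q₄⁻¹C₃)` is symmetric positive
semidefinite for every `ε > 0`, where `[[S₁,S₂],[S₂',S₄]]` is positive semidefinite
and `Q₄` is positive definite. -/
theorem stmt14 {r k s : ℕ} (ε : ℝ) (hε : 0 < ε)
    (S₁ : Matrix (Fin r) (Fin r) ℝ) (S₂ : Matrix (Fin r) (Fin k) ℝ)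
    (S₄ : Matrix (Fin k) (Fin k) ℝ)
    (hS : (Matrix.fromBlocks S₁ S₂ S₂ᵀ S₄).PosSemidef)
    (Q₄ : Matrix (Fin s) (Fin s) ℝ) (hQ₄ : Q₄.PosDef)
    (C₃ : Matrix (Fin s) (Fin r) ℝ) (C₄ : Matrix (Fin s) (Fin k) ℝ)
    (hsym : (S₁ + C₃ᵀ * Q₄⁻¹ * C₃)ᵀ = S₁ + C₃ᵀ * Q₄⁻¹ * C₃) :
    (-((1 / ε) • ((C₃ᵀ * Q₄⁻¹ * C₄ + S₂) *
        (ε • (1 : Matrix (Fin k) (Fin k) ℝ) + S₄ + C₄ᵀ * Q₄⁻¹ * C₄)⁻¹ *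
        (C₃ᵀ * Q₄⁻¹ * C₄ + S₂)ᵀ)) +
      (1 : Matrix (Fin r) (Fin r) ℝ) +
      (1 / ε) • (S₁ + C₃ᵀ * Q₄⁻¹ * C₃)).PosSemidef := by
  set T := S₁ + C₃ᵀ * Q₄⁻¹ * C₃ with hT
  set A := C₃ᵀ * Q₄⁻¹ * C₄ + S₂ with hA
  set W := ε • (1 : Matrix (Fin k) (Fin k) ℝ) + S₄ + C₄ᵀ * Q₄⁻¹ * C₄ with hW
  have hQinv : (Q₄⁻¹).PosSemidef := hQ₄.inv.posSemidef
  have hQinvT : (Q₄⁻¹)ᵀ = Q₄⁻¹ := hQ₄.inv.isHermitian.eq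
  -- the congruence block matrix
  have hN : ((fromCols C₃ C₄)ᴴ * Q₄⁻¹ * fromCols C₃ C₄).PosSemidef :=
    hQinv.conjTranspose_mul_mul_same _
  have hNeq : (fromCols C₃ C₄)ᴴ * Q₄⁻¹ * fromCols C₃ C₄ =
      fromBlocks (C₃ᵀ * Q₄⁻¹ * C₃) (C₃ᵀ * Q₄⁻¹ * C₄)
        (C₄ᵀ * Q₄⁻¹ * C₃) (C₄ᵀ * Q₄⁻¹ * C₄) := by
    rw [conjTranspose_eq_transpose_of_trivial, transpose_fromCols, fromRows_mul,
      fromRows_mul_fromCols]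
  have hC4psd : (C₄ᵀ * Q₄⁻¹ * C₄).PosSemidef := by
    have := hQinv.conjTranspose_mul_mul_same C₄
    simpa using this
  have hS4 : S₄.PosSemidef := by
    have := hS.submatrix (Sum.inr : Fin k → Fin r ⊕ Fin k)
    convert this using 1
    ext i j
    simp
  have hIk : ((ε • (1 : Matrix (Fin k) (Fin k) ℝ))).PosDef :=
    pd_smul Matrix.PosDef.one hε
  have hWpd : W.PosDef := (hIk.add_posSemidef hS4).add_posSemidef hC4psd
  haveI : Invertible W := hWpd.isUnit.invertible
  -- big block matrix is PSD
  have hBig : (fromBlocks (ε • (1 : Matrix (Fin r) (Fin r) ℝ) + T) A Aᴴ W).PosSemidef := by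
    have heq : fromBlocks (ε • (1 : Matrix (Fin r) (Fin r) ℝ) + T) A Aᴴ W =
        fromBlocks S₁ S₂ S₂ᵀ S₄ +
        ((fromCols C₃ C₄)ᴴ * Q₄⁻¹ * fromCols C₃ C₄) +
        ε • (1 : Matrix (Fin r ⊕ Fin k) (Fin r ⊕ Fin k) ℝ) := by
      rw [hNeq, fromBlocks_add, ← fromBlocks_one, fromBlocks_smul, fromBlocks_add]
      simp only [smul_zero, add_zero]
      have hAT : (C₃ᵀ * Q₄⁻¹ * C₄ + S₂)ᴴ = S₂ᵀ + C₄ᵀ * Q₄⁻¹ * C₃ := by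
        rw [conjTranspose_eq_transpose_of_trivial, transpose_add, transpose_mul,
          transpose_mul, transpose_transpose, hQinvT]
        rw [Matrix.mul_assoc]
        abel
      rw [hA, hAT, hT, hW]
      congr 1 <;> abel
    rw [heq]
    exact (hS.add hN).add (psd_smul (Matrix.PosSemidef.one : (1 : Matrix (Fin r ⊕ Fin k) (Fin r ⊕ Fin k) ℝ).PosSemidef) hε.le)
  have hSchur : (ε • (1 : Matrix (Fin r) (Fin r) ℝ) + T - A * W⁻¹ * Aᴴ).PosSemidef :=
    ((Matrix.PosDef.fromBlocks₂₂ _ _ hWpd).mp hBig)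
  have hfin : -((1 / ε) • (A * W⁻¹ * Aᵀ)) + (1 : Matrix (Fin r) (Fin r) ℝ) + (1 / ε) • T =
      (1 / ε) • (ε • (1 : Matrix (Fin r) (Fin r) ℝ) + T - A * W⁻¹ * Aᴴ) := by
    have h1 : (1 / ε) • (ε • (1 : Matrix (Fin r) (Fin r) ℝ)) = 1 := by
      rw [smul_smul, one_div, inv_mul_cancel₀ hε.ne', one_smul]
    rw [conjTranspose_eq_transpose_of_trivial, smul_sub,
      smul_add (1/ε) (ε • (1 : Matrix (Fin r) (Fin r) ℝ)) T, h1]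
    abel
  rw [hfin]
  exact psd_smul hSchur (by positivity)
end

section
/- Suppose sequences u_n → u and z_n → z weakly in L²(t₀,T), with F'z_n ∈ H¹ for all n and sup_n ‖d(F'z_n)/dt + C'z_n − H'u_n‖_{L²} < ∞. Then F'z ∈ H¹ (the distributional derivative d(F'z)/dt is in L²), the derivatives d(F'z_n)/dt converge weakly in L² to d(F'z)/dt, and F'z_n(t₀) → F'z(t₀) in ℝⁿ provided F'z_n(T) → F'z(T) in ℝⁿ. -/
open Matrix MeasureTheory Filter Set
open scoped Topology ENNReal NNReal

namespace S17


instance (t₀ T : ℝ) : IsFiniteMeasure (volume.restrict (Set.Icc t₀ T)) := by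
  constructor
  rw [Measure.restrict_apply_univ]
  exact measure_Icc_lt_top

variable {t₀ T : ℝ}

/-- Test functions: smooth, compactly supported inside `(t₀, T)`. -/
def IsTest (t₀ T : ℝ) (g : ℝ → ℝ) : Prop :=
  ContDiff ℝ (↑(⊤ : ℕ∞)) g ∧ HasCompactSupport g ∧ tsupport g ⊆ Set.Ioo t₀ T

theorem IsTest.memℒp2 {g : ℝ → ℝ} (hg : IsTest t₀ T g) : MemLp g 2 (volume.restrict (Set.Icc t₀ T)) := by
  obtain ⟨C, hC⟩ := hg.2.1.exists_bound_of_continuous hg.1.continuous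
  exact (memLp_top_of_bound hg.1.continuous.aestronglyMeasurable C
    (Filter.Eventually.of_forall hC)).mono_exponent le_top

theorem ae_mem_Ioo (hT : t₀ < T) : ∀ᵐ t ∂(volume.restrict (Set.Icc t₀ T)), t ∈ Set.Ioo t₀ T := by
  rw [ae_restrict_iff' measurableSet_Icc]
  have h0 : volume ({t₀, T} : Set ℝ) = 0 :=
    ((Set.finite_singleton T).insert t₀).measure_zero volume
  filter_upwards [measure_eq_zero_iff_ae_notMem.mp h0] with t ht htIcc
  rcases lt_or_eq_of_le htIcc.1 with h1 | h1
  · rcases lt_or_eq_of_le htIcc.2 with h2 | h2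
    · exact ⟨h1, h2⟩
    · exact absurd (by simp [h2]) ht
  · exact absurd (by simp [← h1]) ht

theorem integral_m17_eq_volume {g : ℝ → ℝ} (hg : tsupport g ⊆ Set.Ioo t₀ T) :
    ∫ t, g t ∂(volume.restrict (Set.Icc t₀ T)) = ∫ t, g t := by
  refine setIntegral_eq_integral_of_forall_compl_eq_zero (fun x hx => ?_)
  by_contra hne
  exact hx (Set.Ioo_subset_Icc_self (hg (subset_tsupport g hne)))

/-- The primitive of a smooth function is smooth. -/
theorem contDiff_primitive {w : ℝ → ℝ} (hw : ContDiff ℝ (↑(⊤ : ℕ∞)) w) (a : ℝ) :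
    ContDiff ℝ (↑(⊤ : ℕ∞)) (fun x => ∫ t in a..x, w t) := by
  have hd : ∀ x : ℝ, HasDerivAt (fun u => ∫ t in a..u, w t) (w x) x := fun x =>
    (hw.continuous.integral_hasStrictDerivAt a x).hasDerivAt
  rw [contDiff_infty_iff_deriv]
  refine ⟨fun x => (hd x).differentiableAt, ?_⟩
  have : deriv (fun u => ∫ t in a..u, w t) = w := funext fun x => (hd x).deriv
  rw [this]; exact hw

/-- A test function with zero total integral has a primitive which is again a
test function. -/
theorem exists_primitive_test (hT : t₀ < T) {w : ℝ → ℝ}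
    (hw : IsTest t₀ T w) (hw0 : ∫ t, w t = 0) :
    ∃ g : ℝ → ℝ, IsTest t₀ T g ∧ deriv g = w := by
  have hK : IsCompact (tsupport w) := hw.2.1
  have hd : ∀ x : ℝ, HasDerivAt (fun u => ∫ t in t₀..u, w t) (w x) x := fun x =>
    (hw.1.continuous.integral_hasStrictDerivAt t₀ x).hasDerivAt
  obtain ⟨a, b, hsub, hIcc⟩ : ∃ a b : ℝ, tsupport w ⊆ Set.Icc a b ∧
      Set.Icc a b ⊆ Set.Ioo t₀ T := by
    rcases Set.eq_empty_or_nonempty (tsupport w) with he | hne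
    · refine ⟨(t₀ + T) / 2, (t₀ + T) / 2, by simp [he], fun x hx => ?_⟩
      have hx' : x = (t₀ + T) / 2 := le_antisymm hx.2 hx.1
      constructor <;> (rw [hx']; linarith)
    · refine ⟨sInf (tsupport w), sSup (tsupport w), fun x hx =>
        ⟨csInf_le hK.bddBelow hx, le_csSup hK.bddAbove hx⟩, fun x hx => ?_⟩
      have h1 := hw.2.2 (hK.sInf_mem hne)
      have h2 := hw.2.2 (hK.sSup_mem hne)
      exact ⟨lt_of_lt_of_le h1.1 hx.1, lt_of_le_of_lt hx.2 h2.2⟩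
  have ht₀T : Set.Icc a b ⊆ Set.Ioo t₀ T := hIcc
  have hwz : ∀ y, y ∉ Set.Icc a b → w y = 0 := fun y hy =>
    image_eq_zero_of_notMem_tsupport (fun hmem => hy (hsub hmem))
  have hzero : ∀ x, x ∉ Set.Icc a b → (∫ t in t₀..x, w t) = 0 := by
    intro x hx
    rw [Set.mem_Icc, not_and_or, not_le, not_le] at hx
    rcases hx with hxa | hbx
    · -- x < a; note t₀ < a whenever Icc a b nonempty; handle empty case
      rcases le_or_gt a b with haleb | hblta
      · have ht₀a : t₀ < a := (hIcc (Set.left_mem_Icc.mpr haleb)).1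
        have : EqOn w (fun _ => (0:ℝ)) (Set.uIcc t₀ x) := by
          intro y hy
          refine hwz y (fun hy' => ?_)
          have hy2 : y ≤ max t₀ x := hy.2
          have hmax : max t₀ x < a := max_lt ht₀a hxa
          have : y ≤ max t₀ x := hy2
          exact absurd hy'.1 (not_le.mpr (lt_of_le_of_lt this hmax))
        rw [intervalIntegral.integral_congr this, intervalIntegral.integral_const, smul_zero]
      · -- Icc a b empty: w ≡ 0
        have : EqOn w (fun _ => (0:ℝ)) (Set.uIcc t₀ x) := fun y _ =>
          hwz y (fun hy' => absurd (le_trans hy'.1 hy'.2) (not_le.mpr hblta))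
        rw [intervalIntegral.integral_congr this, intervalIntegral.integral_const, smul_zero]
    · -- b < x
      rcases le_or_gt a b with haleb | hblta
      · have ht₀a : t₀ < a := (hIcc (Set.left_mem_Icc.mpr haleb)).1
        have ht₀x : t₀ ≤ x := le_of_lt (lt_trans (lt_of_lt_of_le ht₀a haleb) hbx)
        rw [intervalIntegral.integral_of_le ht₀x,
          setIntegral_eq_integral_of_forall_compl_eq_zero, hw0]
        intro y hy
        rw [Set.mem_Ioc, not_and_or, not_lt, not_le] at hy
        refine hwz y (fun hy' => ?_)
        rcases hy with h | h
        · exact absurd (lt_of_lt_of_le ht₀a hy'.1) (not_lt.mpr h)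
        · exact absurd (lt_of_le_of_lt hy'.2 hbx) (not_lt.mpr (le_of_lt h))
      · have : EqOn w (fun _ => (0:ℝ)) (Set.uIcc t₀ x) := fun y _ =>
          hwz y (fun hy' => absurd (le_trans hy'.1 hy'.2) (not_le.mpr hblta))
        rw [intervalIntegral.integral_congr this, intervalIntegral.integral_const, smul_zero]
  refine ⟨fun x => ∫ t in t₀..x, w t, ⟨contDiff_primitive hw.1 t₀, ?_, ?_⟩, ?_⟩
  · exact HasCompactSupport.intro isCompact_Icc hzero
  · refine le_trans (closure_minimal (fun x hx => ?_) isClosed_Icc) hIcc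
    by_contra hxab
    exact hx (hzero x hxab)
  · exact funext fun x => (hd x).deriv


variable {t₀ T : ℝ}


theorem intInt_eq {E : Type*} [NormedAddCommGroup E] [NormedSpace ℝ E] (hT : t₀ ≤ T)
    (f : ℝ → E) : ∫ t in t₀..T, f t = ∫ t, f t ∂(volume.restrict (Set.Icc t₀ T)) := by
  rw [intervalIntegral.integral_of_le hT, ← integral_Icc_eq_integral_Ioc]

theorem inner_toLp (hT : t₀ ≤ T) {f g : ℝ → ℝ} (hf : MemLp f 2 (volume.restrict (Set.Icc t₀ T)))
    (hg : MemLp g 2 (volume.restrict (Set.Icc t₀ T))) :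
    (inner ℝ (hf.toLp f) (hg.toLp g) : ℝ) = ∫ t in t₀..T, f t * g t := by
  rw [L2.inner_def, intInt_eq hT]
  apply integral_congr_ae
  filter_upwards [hf.coeFn_toLp, hg.coeFn_toLp] with t h1 h2
  rw [RCLike.inner_apply', h1, h2, RCLike.conj_to_real]

theorem memℒp_component {k : ℕ} {ν : Measure ℝ} {f : ℝ → Fin k → ℝ} (hf : MemLp f 2 ν)
    (j : Fin k) : MemLp (fun t => f t j) 2 ν := by
  refine hf.of_le ((continuous_apply j).comp_aestronglyMeasurable hf.1) ?_
  filter_upwards with t using norm_le_pi_norm (f t) j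

theorem memℒp_smul_const {k : ℕ} {ν : Measure ℝ} [IsFiniteMeasure ν] {c : ℝ → ℝ}
    (hc : MemLp c 2 ν) (w : Fin k → ℝ) : MemLp (fun t => c t • w) 2 ν := by
  have := (ContinuousLinearMap.toSpanSingleton ℝ w).comp_memLp' hc
  convert this using 1
  · rfl
  · funext t; simp [ContinuousLinearMap.toSpanSingleton_apply]



variable {𝓗 : Type*} [NormedAddCommGroup 𝓗] [InnerProductSpace ℝ 𝓗] [CompleteSpace 𝓗]

theorem exists_norm_bound (Z : ℕ → 𝓗)
    (h : ∀ V : 𝓗, ∃ L : ℝ, Tendsto (fun k => (inner ℝ (Z k) V : ℝ)) atTop (𝓝 L)) :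
    ∃ M : ℝ, ∀ k, ‖Z k‖ ≤ M := by
  have h' : ∀ V : 𝓗, ∃ C : ℝ, ∀ k, ‖(innerSL ℝ (Z k)) V‖ ≤ C := by
    intro V
    obtain ⟨L, hL⟩ := h V
    obtain ⟨R, hR⟩ := (Metric.isBounded_range_of_tendsto _ hL).subset_closedBall 0
    refine ⟨R, fun k => ?_⟩
    have := hR ⟨k, rfl⟩
    simpa [Metric.mem_closedBall, dist_zero_right] using this
  obtain ⟨C, hC⟩ := banach_steinhaus h'
  exact ⟨C, fun k => by rw [← innerSL_apply_norm ℝ (Z k)]; exact hC k⟩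

theorem weak_limit (Z : ℕ → 𝓗) (M : ℝ) (hM : ∀ k, ‖Z k‖ ≤ M) (S : Set 𝓗)
    (hdense : (Submodule.span ℝ S).topologicalClosure = ⊤)
    (hconv : ∀ W ∈ S, ∃ L : ℝ, Tendsto (fun k => (inner ℝ (Z k) W : ℝ)) atTop (𝓝 L)) :
    ∃ g : 𝓗, ∀ V : 𝓗, Tendsto (fun k => (inner ℝ (Z k) V : ℝ)) atTop (𝓝 (inner ℝ g V)) := by
  -- extend convergence to the span
  have hspan : ∀ W ∈ Submodule.span ℝ S, ∃ L : ℝ,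
      Tendsto (fun k => (inner ℝ (Z k) W : ℝ)) atTop (𝓝 L) := by
    intro W hW
    induction hW using Submodule.span_induction with
    | mem x hx => exact hconv x hx
    | zero => exact ⟨0, by simpa using tendsto_const_nhds⟩
    | add x y hx hy ihx ihy =>
      obtain ⟨L1, h1⟩ := ihx; obtain ⟨L2, h2⟩ := ihy
      exact ⟨L1 + L2, by simpa [inner_add_right] using h1.add h2⟩
    | smul a x hx ihx =>
      obtain ⟨L, hL⟩ := ihx
      exact ⟨a * L, by simpa [real_inner_smul_right] using hL.const_mul a⟩
  -- Cauchy for all V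
  have hM' : 0 ≤ M := le_trans (norm_nonneg _) (hM 0)
  have hcauchy : ∀ V : 𝓗, CauchySeq (fun k => (inner ℝ (Z k) V : ℝ)) := by
    intro V
    rw [Metric.cauchySeq_iff]
    intro ε hε
    have hV : V ∈ (Submodule.span ℝ S : Submodule ℝ 𝓗).topologicalClosure := by
      rw [hdense]; trivial
    rw [← SetLike.mem_coe, Submodule.topologicalClosure_coe, mem_closure_iff] at hV
    obtain ⟨W, hW⟩ := hV (Metric.ball V (ε / (4 * (M + 1)))) Metric.isOpen_ball
      (Metric.mem_ball_self (by positivity))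
    have hWV : W ∈ Metric.ball V (ε / (4 * (M + 1))) := hW.1
    have hWmem : W ∈ Submodule.span ℝ S := hW.2
    obtain ⟨L, hL⟩ := hspan W hWmem
    have hLC : CauchySeq (fun k => (inner ℝ (Z k) W : ℝ)) := hL.cauchySeq
    rw [Metric.cauchySeq_iff] at hLC
    obtain ⟨N, hN⟩ := hLC (ε / 2) (by positivity)
    refine ⟨N, fun a ha b hb => ?_⟩
    have hdist : ∀ k, ‖(inner ℝ (Z k) V : ℝ) - inner ℝ (Z k) W‖ ≤ M * ‖V - W‖ := by
      intro k
      rw [← inner_sub_right]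
      calc ‖(inner ℝ (Z k) (V - W) : ℝ)‖ ≤ ‖Z k‖ * ‖V - W‖ := norm_inner_le_norm _ _
        _ ≤ M * ‖V - W‖ := by gcongr; exact hM k
    have hVW : ‖V - W‖ < ε / (4 * (M + 1)) := by
      have := hWV  -- W ∈ ball V _
      rw [Metric.mem_ball, dist_comm] at this
      simpa [dist_eq_norm] using this
    have key : ∀ k, ‖(inner ℝ (Z k) V : ℝ) - inner ℝ (Z k) W‖ ≤ ε / 4 := by
      intro k
      refine le_trans (hdist k) ?_
      have : M * ‖V - W‖ ≤ M * (ε / (4 * (M + 1))) := by gcongr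
      refine le_trans this ?_
      have heq : M * (ε / (4 * (M + 1))) = (M * ε) / (4 * (M + 1)) := by ring
      rw [heq, div_le_div_iff₀ (by positivity) (by norm_num : (0:ℝ) < 4)]
      nlinarith [hM', hε.le]
    have h1 := key a; have h2 := key b
    have h3 := hN a ha b hb
    rw [Real.dist_eq] at *
    have : (inner ℝ (Z a) V : ℝ) - inner ℝ (Z b) V =
        ((inner ℝ (Z a) V : ℝ) - inner ℝ (Z a) W) + ((inner ℝ (Z a) W : ℝ) - inner ℝ (Z b) W)
        + ((inner ℝ (Z b) W : ℝ) - inner ℝ (Z b) V) := by ring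
    rw [this]
    calc |_ + _ + _| ≤ |((inner ℝ (Z a) V : ℝ) - inner ℝ (Z a) W) + ((inner ℝ (Z a) W : ℝ) - inner ℝ (Z b) W)| + |(inner ℝ (Z b) W : ℝ) - inner ℝ (Z b) V| := abs_add_le _ _
      _ ≤ |(inner ℝ (Z a) V : ℝ) - inner ℝ (Z a) W| + |(inner ℝ (Z a) W : ℝ) - inner ℝ (Z b) W| + |(inner ℝ (Z b) W : ℝ) - inner ℝ (Z b) V| := by
          gcongr; exact abs_add_le _ _
      _ < ε := by
          have h2' : |(inner ℝ (Z b) W : ℝ) - inner ℝ (Z b) V| ≤ ε / 4 := by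
            rw [abs_sub_comm]; exact h2
          simp only [Real.norm_eq_abs] at h1 h2'
          linarith
  -- limit functional
  choose Λ hΛ using fun V => cauchySeq_tendsto_of_complete (hcauchy V)
  have hadd : ∀ V W : 𝓗, Λ (V + W) = Λ V + Λ W := by
    intro V W
    refine tendsto_nhds_unique ?_ ((hΛ V).add (hΛ W))
    simpa [inner_add_right] using hΛ (V + W)
  have hsmul : ∀ (a : ℝ) (V : 𝓗), Λ (a • V) = a * Λ V := by
    intro a V
    refine tendsto_nhds_unique ?_ ((hΛ V).const_mul a)
    simpa [real_inner_smul_right] using hΛ (a • V)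
  have hbound : ∀ V : 𝓗, ‖Λ V‖ ≤ M * ‖V‖ := by
    intro V
    refine le_of_tendsto ((hΛ V).norm) ?_
    filter_upwards with k
    calc ‖(inner ℝ (Z k) V : ℝ)‖ ≤ ‖Z k‖ * ‖V‖ := norm_inner_le_norm _ _
      _ ≤ M * ‖V‖ := by gcongr; exact hM k
  let Λlin : 𝓗 →ₗ[ℝ] ℝ :=
    { toFun := Λ, map_add' := hadd, map_smul' := hsmul }
  let Λc : 𝓗 →L[ℝ] ℝ := Λlin.mkContinuous M hbound
  refine ⟨(InnerProductSpace.toDual ℝ 𝓗).symm Λc, fun V => ?_⟩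
  have : (inner ℝ ((InnerProductSpace.toDual ℝ 𝓗).symm Λc) V : ℝ) = Λc V := by
    rw [← InnerProductSpace.toDual_apply_apply]
    simp
  rw [this]
  exact hΛ V



variable {t₀ T : ℝ}

theorem fubini_primitive (hT : t₀ ≤ T) {f c : ℝ → ℝ}
    (hf : IntegrableOn f (Set.Icc t₀ T)) (hc : IntegrableOn c (Set.Icc t₀ T)) :
    ∫ s in t₀..T, f s * (∫ t in s..T, c t) = ∫ t in t₀..T, (∫ s in t₀..t, f s) * c t := by
  set I := Set.Ioc t₀ T with hI
  have hmI : MeasurableSet I := measurableSet_Ioc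
  have hf' : Integrable f (volume.restrict I) := hf.mono_set Set.Ioc_subset_Icc_self
  have hc' : Integrable c (volume.restrict I) := hc.mono_set Set.Ioc_subset_Icc_self
  set F2 : ℝ → ℝ → ℝ := fun s t => Set.indicator (Set.Ici s) (fun t' => f s * c t') t with hF2
  have huncurry : Function.uncurry F2 =
      Set.indicator {p : ℝ × ℝ | p.1 ≤ p.2} (fun p => f p.1 * c p.2) := by
    funext p
    rcases p with ⟨s, t⟩
    simp only [Function.uncurry, hF2, Set.indicator_apply, Set.mem_Ici, Set.mem_setOf_eq]
  have hint : Integrable (Function.uncurry F2)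
      ((volume.restrict I).prod (volume.restrict I)) := by
    rw [huncurry]
    exact (hf'.mul_prod hc').indicator (measurableSet_le measurable_fst measurable_snd)
  have hswap := integral_integral_swap hint
  have hLHS : ∫ s in t₀..T, f s * (∫ t in s..T, c t) = ∫ s in I, ∫ t in I, F2 s t := by
    rw [intervalIntegral.integral_of_le hT]
    refine setIntegral_congr_fun hmI (fun s hs => ?_)
    have h1 : I ∩ Set.Ici s = Set.Icc s T := by
      ext t
      simp only [hI, Set.mem_inter_iff, Set.mem_Ioc, Set.mem_Ici, Set.mem_Icc]
      constructor
      · rintro ⟨⟨_, h2⟩, h3⟩; exact ⟨h3, h2⟩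
      · rintro ⟨h3, h2⟩; exact ⟨⟨lt_of_lt_of_le hs.1 h3, h2⟩, h3⟩
    rw [setIntegral_indicator (measurableSet_Ici), h1, integral_Icc_eq_integral_Ioc,
      integral_const_mul, ← intervalIntegral.integral_of_le hs.2]
  have hRHS : ∫ t in t₀..T, (∫ s in t₀..t, f s) * c t = ∫ t in I, ∫ s in I, F2 s t := by
    rw [intervalIntegral.integral_of_le hT]
    refine setIntegral_congr_fun hmI (fun t ht => ?_)
    have heq : ∀ s, F2 s t = Set.indicator (Set.Iic t) (fun s' => f s' * c t) s := by
      intro s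
      simp only [hF2, Set.indicator_apply, Set.mem_Ici, Set.mem_Iic]
    have h1 : I ∩ Set.Iic t = Set.Ioc t₀ t := by
      ext s
      simp only [hI, Set.mem_inter_iff, Set.mem_Ioc, Set.mem_Iic]
      constructor
      · rintro ⟨⟨h2, _⟩, h3⟩; exact ⟨h2, h3⟩
      · rintro ⟨h2, h3⟩; exact ⟨⟨h2, le_trans h3 ht.2⟩, h3⟩
    symm
    calc ∫ s in I, F2 s t = ∫ s in I, Set.indicator (Set.Iic t) (fun s' => f s' * c t) s :=
          integral_congr_ae (Filter.Eventually.of_forall (fun s => heq s))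
      _ = ∫ s in I ∩ Set.Iic t, f s * c t := setIntegral_indicator measurableSet_Iic
      _ = (∫ s in Set.Ioc t₀ t, f s) * c t := by rw [h1, integral_mul_const]
      _ = (∫ s in t₀..t, f s) * c t := by rw [← intervalIntegral.integral_of_le ht.1.le]
  rw [hLHS, hRHS, ← hswap]



/-- The span of test functions is dense in `L²(t₀,T)`. -/
theorem span_test_dense (hT : t₀ < T) :
    (Submodule.span ℝ {x : Lp ℝ 2 (volume.restrict (Set.Icc t₀ T)) | ∃ g : ℝ → ℝ, ∃ hg : IsTest t₀ T g,
      x = (hg.memℒp2).toLp g}).topologicalClosure = ⊤ := by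
  rw [Submodule.topologicalClosure_eq_top_iff]
  rw [Submodule.eq_bot_iff]
  intro x hx
  rw [Submodule.mem_orthogonal] at hx
  have hint : Integrable (⇑x) (volume.restrict (Set.Icc t₀ T)) := (Lp.memLp x).integrable one_le_two
  have key : ∀ g : ℝ → ℝ, ContDiff ℝ (↑(⊤ : ℕ∞)) g → HasCompactSupport g →
      tsupport g ⊆ Set.Ioo t₀ T → ∫ t, g t • (x : ℝ → ℝ) t ∂(volume.restrict (Set.Icc t₀ T)) = 0 := by
    intro g h1 h2 h3
    have hg : IsTest t₀ T g := ⟨h1, h2, h3⟩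
    have hmem : (hg.memℒp2).toLp g ∈ Submodule.span ℝ {y : Lp ℝ 2 (volume.restrict (Set.Icc t₀ T)) |
        ∃ g' : ℝ → ℝ, ∃ hg' : IsTest t₀ T g', y = (hg'.memℒp2).toLp g'} :=
      Submodule.subset_span ⟨g, hg, rfl⟩
    have h0 := hx _ hmem
    rw [L2.inner_def] at h0
    rw [← h0]
    apply integral_congr_ae
    filter_upwards [(hg.memℒp2).coeFn_toLp] with t h4
    rw [RCLike.inner_apply', h4, RCLike.conj_to_real, smul_eq_mul]
  have hae := (isOpen_Ioo (a := t₀) (b := T)).ae_eq_zero_of_integral_contDiff_smul_eq_zero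
    (hint.locallyIntegrable.locallyIntegrableOn _) key
  rw [Lp.eq_zero_iff_ae_eq_zero]
  filter_upwards [hae, ae_mem_Ioo hT] with t h1 h2
  exact h1 h2

/-- If `∫ D·g' = 0` for all test functions `g`, then `D` is a.e. constant. -/
theorem eq_const_of_integral_deriv_eq_zero (hT : t₀ < T) {D : ℝ → ℝ}
    (hD : Integrable D (volume.restrict (Set.Icc t₀ T)))
    (h : ∀ g : ℝ → ℝ, IsTest t₀ T g → ∫ t, D t * deriv g t ∂(volume.restrict (Set.Icc t₀ T)) = 0) :
    ∃ cst : ℝ, ∀ᵐ t ∂(volume.restrict (Set.Icc t₀ T)), D t = cst := by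
  -- bump function χ with integral 1, supported in (t₀, T)
  set c : ℝ := (t₀ + T) / 2 with hc
  set r : ℝ := (T - t₀) / 2 with hr
  have hrpos : 0 < r := by rw [hr]; linarith
  let f : ContDiffBump c := ⟨r / 2, r * 3 / 4, by positivity, by linarith⟩
  set χ : ℝ → ℝ := f.normed volume with hχ
  have hχtest : IsTest t₀ T χ := by
    refine ⟨f.contDiff_normed, f.hasCompactSupport_normed, ?_⟩
    rw [hχ, f.tsupport_normed_eq, Real.closedBall_eq_Icc]
    intro y hy
    simp only [Set.mem_Icc] at hy
    constructor
    · have : t₀ < c - r * 3 / 4 := by rw [hc, hr]; linarith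
      have hy1 : c - r * 3 / 4 ≤ y := hy.1
      linarith [hy1]
    · have : c + r * 3 / 4 < T := by rw [hc, hr]; linarith
      have hy2 : y ≤ c + r * 3 / 4 := hy.2
      linarith [hy2]
  have hχint : ∫ t, χ t = 1 := f.integral_normed
  set cst : ℝ := ∫ t, χ t * D t ∂(volume.restrict (Set.Icc t₀ T)) with hcst
  -- main identity : ∫ h·D dμ = (∫ h dvol) * cst for every test h
  have main : ∀ hh : ℝ → ℝ, IsTest t₀ T hh →
      ∫ t, hh t * D t ∂(volume.restrict (Set.Icc t₀ T)) = (∫ t, hh t) * cst := by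
    intro hh hht
    set a : ℝ := ∫ s, hh s with ha
    set w : ℝ → ℝ := fun t => hh t - a * χ t with hw
    have hwsupp : tsupport w ⊆ tsupport hh ∪ tsupport χ := by
      refine closure_minimal (fun y hy => ?_) ((isClosed_closure).union isClosed_closure)
      by_contra hny
      rw [Set.mem_union, not_or] at hny
      have h1 : hh y = 0 := image_eq_zero_of_notMem_tsupport hny.1
      have h2 : χ y = 0 := image_eq_zero_of_notMem_tsupport hny.2
      exact hy (by simp [hw, h1, h2])
    have hwtest : IsTest t₀ T w := by
      refine ⟨hht.1.sub (contDiff_const.mul hχtest.1), ?_, ?_⟩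
      · exact IsCompact.of_isClosed_subset (hht.2.1.union hχtest.2.1) isClosed_closure hwsupp
      · exact subset_trans hwsupp (Set.union_subset hht.2.2 hχtest.2.2)
    have hireg : Integrable hh := hht.1.continuous.integrable_of_hasCompactSupport hht.2.1
    have hiχ : Integrable χ := hχtest.1.continuous.integrable_of_hasCompactSupport hχtest.2.1
    have hw0 : ∫ t, w t = 0 := by
      rw [hw]
      rw [integral_sub hireg (hiχ.const_mul a), integral_const_mul, hχint]
      simp [ha]
    obtain ⟨g, hgtest, hgderiv⟩ := exists_primitive_test hT hwtest hw0
    have h0 := h g hgtest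
    rw [hgderiv] at h0
    have hiD1 : Integrable (fun t => hh t * D t) (volume.restrict (Set.Icc t₀ T)) :=
      hD.bdd_mul hht.1.continuous.aestronglyMeasurable
        (ae_of_all _ (hht.2.1.exists_bound_of_continuous hht.1.continuous).choose_spec)
    have hiD2 : Integrable (fun t => (a * χ t) * D t) (volume.restrict (Set.Icc t₀ T)) := by
      obtain ⟨C, hC⟩ := hχtest.2.1.exists_bound_of_continuous hχtest.1.continuous
      refine hD.bdd_mul (c := |a| * C) (aestronglyMeasurable_const.mul hχtest.1.continuous.aestronglyMeasurable) ?_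
      exact ae_of_all _ (fun x => by
        rw [norm_mul]
        exact mul_le_mul_of_nonneg_left (hC x) (abs_nonneg a))
    have hsplit : ∫ t, D t * w t ∂(volume.restrict (Set.Icc t₀ T))
        = ∫ t, hh t * D t ∂(volume.restrict (Set.Icc t₀ T)) - a * cst := by
      have : (fun t => D t * w t) = fun t => hh t * D t - (a * χ t) * D t := by
        funext t; rw [hw]; ring
      rw [this, integral_sub hiD1 hiD2, hcst]
      congr 1
      simp_rw [mul_assoc]
      rw [integral_const_mul]
    rw [h0] at hsplit
    linarith [hsplit]
  -- now apply the distributional vanishing criterion to D - cst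
  refine ⟨cst, ?_⟩
  have hDc : Integrable (fun t => D t - cst) (volume.restrict (Set.Icc t₀ T)) := hD.sub (integrable_const cst)
  have key : ∀ g : ℝ → ℝ, ContDiff ℝ (↑(⊤ : ℕ∞)) g → HasCompactSupport g →
      tsupport g ⊆ Set.Ioo t₀ T →
      ∫ t, g t • (D t - cst) ∂(volume.restrict (Set.Icc t₀ T)) = 0 := by
    intro g h1 h2 h3
    have hgt : IsTest t₀ T g := ⟨h1, h2, h3⟩
    have higD : Integrable (fun t => g t * D t) (volume.restrict (Set.Icc t₀ T)) :=
      hD.bdd_mul h1.continuous.aestronglyMeasurable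
        (ae_of_all _ (h2.exists_bound_of_continuous h1.continuous).choose_spec)
    have : (fun t => g t • (D t - cst)) = fun t => g t * D t - g t * cst := by
      funext t; simp [smul_eq_mul]; ring
    rw [this, integral_sub higD ((h1.continuous.integrable_of_hasCompactSupport h2).restrict.mul_const cst),
      main g hgt]
    have : ∫ t, g t * cst ∂(volume.restrict (Set.Icc t₀ T)) = (∫ t, g t ∂(volume.restrict (Set.Icc t₀ T))) * cst := by
      rw [← integral_mul_const]
    rw [this, integral_m17_eq_volume h3, sub_self]
  have hae := (isOpen_Ioo (a := t₀) (b := T)).ae_eq_zero_of_integral_contDiff_smul_eq_zero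
    (hDc.locallyIntegrable.locallyIntegrableOn _) key
  filter_upwards [hae, ae_mem_Ioo hT] with t ht1 ht2
  have := ht1 ht2
  linarith [this]



theorem integrable_mul2 {ν : Measure ℝ} {f g : ℝ → ℝ} (hf : MemLp f 2 ν) (hg : MemLp g 2 ν) :
    Integrable (fun t => f t * g t) ν := by
  have h := L2.integrable_inner (𝕜 := ℝ) (hf.toLp f) (hg.toLp g)
  apply h.congr
  filter_upwards [hf.coeFn_toLp, hg.coeFn_toLp] with t h1 h2
  rw [RCLike.inner_apply', h1, h2, RCLike.conj_to_real]

theorem intervalIntegrable_mul2 (hT : t₀ ≤ T) {f g : ℝ → ℝ}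
    (hf : MemLp f 2 (volume.restrict (Set.Icc t₀ T)))
    (hg : MemLp g 2 (volume.restrict (Set.Icc t₀ T))) :
    IntervalIntegrable (fun t => f t * g t) volume t₀ T := by
  have h : IntegrableOn (fun t => f t * g t) (Set.Icc t₀ T) volume := integrable_mul2 hf hg
  exact (by rwa [Set.uIcc_of_le hT] : IntegrableOn (fun t => f t * g t) (Set.uIcc t₀ T) volume).intervalIntegrable

theorem intervalIntegrable_of_memℒp {E : Type*} [NormedAddCommGroup E] (hT : t₀ ≤ T)
    {f : ℝ → E} (hf : MemLp f 2 (volume.restrict (Set.Icc t₀ T))) {a b : ℝ}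
    (ha : a ∈ Set.Icc t₀ T) (hb : b ∈ Set.Icc t₀ T) :
    IntervalIntegrable f volume a b := by
  have h : IntegrableOn f (Set.Icc t₀ T) volume := hf.integrable one_le_two
  refine (h.mono_set ?_).intervalIntegrable
  intro x hx
  rcases le_total a b with hab | hab
  · rw [Set.uIcc_of_le hab] at hx
    exact ⟨le_trans ha.1 hx.1, le_trans hx.2 hb.2⟩
  · rw [Set.uIcc_of_ge hab] at hx
    exact ⟨le_trans hb.1 hx.1, le_trans hx.2 ha.2⟩

theorem memℒp_pi {k : ℕ} {ν : Measure ℝ} [IsFiniteMeasure ν] {f : ℝ → Fin k → ℝ}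
    (h : ∀ j, MemLp (fun t => f t j) 2 ν) : MemLp f 2 ν := by
  have heq : f = ∑ j : Fin k, (fun t => f t j • (Pi.single j (1 : ℝ) : Fin k → ℝ)) := by
    funext t
    rw [Finset.sum_apply]
    have : ∀ j : Fin k, (fun t => f t j • (Pi.single j (1 : ℝ) : Fin k → ℝ)) t = Pi.single j (f t j) := by
      intro j
      show f t j • (Pi.single j (1:ℝ) : Fin k → ℝ) = Pi.single j (f t j)
      rw [← Pi.single_smul, smul_eq_mul, mul_one]
    simp_rw [this]
    exact (Finset.univ_sum_single (f t)).symm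
  rw [heq]
  exact memLp_finset_sum' _ (fun j _ => memℒp_smul_const (h j) (Pi.single j (1:ℝ) : Fin k → ℝ))

theorem continuousOn_matrix_elem {k l : ℕ} {A : ℝ → Matrix (Fin k) (Fin l) ℝ}
    (hA : ContinuousOn A (Set.Icc t₀ T)) (i : Fin k) (j : Fin l) :
    ContinuousOn (fun t => A t i j) (Set.Icc t₀ T) := by
  have hcont : Continuous (fun M : Matrix (Fin k) (Fin l) ℝ => M i j) :=
    continuous_id.matrix_elem i j
  exact hcont.comp_continuousOn hA

theorem memℒp_entry_mul {A : ℝ → ℝ} (hA : ContinuousOn A (Set.Icc t₀ T))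
    {zz : ℝ → ℝ} (hz : MemLp zz 2 (volume.restrict (Set.Icc t₀ T))) :
    MemLp (fun t => A t * zz t) 2 (volume.restrict (Set.Icc t₀ T)) := by
  obtain ⟨MA, hMA⟩ := isCompact_Icc.exists_bound_of_continuousOn hA
  refine MemLp.of_le (hz.const_mul MA) ((hA.aestronglyMeasurable measurableSet_Icc).mul hz.1) ?_
  filter_upwards [ae_restrict_mem measurableSet_Icc] with t ht
  rw [norm_mul, norm_mul]
  gcongr
  exact le_trans (hMA t ht) (le_abs_self MA)

theorem memℒp_mulVecT {k l : ℕ} {A : ℝ → Matrix (Fin k) (Fin l) ℝ}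
    (hA : ContinuousOn A (Set.Icc t₀ T)) {zz : ℝ → Fin k → ℝ}
    (hz : MemLp zz 2 (volume.restrict (Set.Icc t₀ T))) (j : Fin l) :
    MemLp (fun t => (A t)ᵀ.mulVec (zz t) j) 2 (volume.restrict (Set.Icc t₀ T)) := by
  have heq : (fun t => (A t)ᵀ.mulVec (zz t) j)
      = fun t => ∑ i : Fin k, A t i j * zz t i := by
    funext t
    simp [Matrix.mulVec, dotProduct, Matrix.transpose_apply]
  rw [heq]
  have : (fun t => ∑ i : Fin k, A t i j * zz t i)
      = ∑ i : Fin k, (fun t => A t i j * zz t i) := by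
    funext t; rw [Finset.sum_apply]
  rw [this]
  exact memLp_finset_sum' _ (fun i _ =>
    memℒp_entry_mul (continuousOn_matrix_elem hA i j) (memℒp_component hz i))

/-- Integration by parts against a test function, written via the primitive. -/
theorem key_chain (hT : t₀ < T) {f : ℝ → ℝ}
    (hfi : IntegrableOn f (Set.Icc t₀ T)) {g : ℝ → ℝ} (hg : IsTest t₀ T g) :
    ∫ s in t₀..T, f s * g s
      = ∫ t in t₀..T, (∫ s in t₀..t, f s) * (-deriv g t) := by
  have hdc : Continuous (deriv g) := (contDiff_infty_iff_deriv.mp hg.1).2.continuous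
  have hgs : ∀ s, g s = ∫ t in s..T, -deriv g t := by
    intro s
    rw [intervalIntegral.integral_neg, intervalIntegral.integral_deriv_eq_sub
      (fun x _ => (hg.1.differentiable (by simp)).differentiableAt)
      (hdc.intervalIntegrable _ _)]
    have hgT : g T = 0 := image_eq_zero_of_notMem_tsupport
      (fun hmem => lt_irrefl T (hg.2.2 hmem).2)
    rw [hgT]; ring
  have h1 : ∫ s in t₀..T, f s * g s = ∫ s in t₀..T, f s * (∫ t in s..T, -deriv g t) := by
    apply intervalIntegral.integral_congr
    intro s _
    show f s * g s = f s * ∫ t in s..T, -deriv g t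
    rw [← hgs]
  rw [h1]
  exact fubini_primitive hT.le hfi (hdc.neg.continuousOn.integrableOn_Icc)

/-- Norm comparison for `toLp` under a pointwise bound. -/
theorem norm_toLp_le {ν : Measure ℝ} {f g : ℝ → ℝ} (hf : MemLp f 2 ν) (hg : MemLp g 2 ν)
    {c : ℝ} (hc : 0 ≤ c) (h : ∀ᵐ t ∂ν, |f t| ≤ c * |g t|) :
    ‖hf.toLp f‖ ≤ c * ‖hg.toLp g‖ := by
  rw [Lp.norm_toLp, Lp.norm_toLp]
  have h1 : eLpNorm f 2 ν ≤ eLpNorm (fun t => c * g t) 2 ν := by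
    apply eLpNorm_mono_ae
    filter_upwards [h] with t ht
    rw [Real.norm_eq_abs, Real.norm_eq_abs, abs_mul, abs_of_nonneg hc]
    exact ht
  have h2 : eLpNorm (fun t => c * g t) 2 ν = ‖c‖₊ * eLpNorm g 2 ν := by
    exact eLpNorm_const_smul c g 2 ν
  rw [h2] at h1
  calc (eLpNorm f 2 ν).toReal ≤ ((‖c‖₊ : ℝ≥0∞) * eLpNorm g 2 ν).toReal := by
        apply ENNReal.toReal_mono _ h1
        exact ENNReal.mul_ne_top ENNReal.coe_ne_top hg.2.ne
    _ = c * (eLpNorm g 2 ν).toReal := by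
        rw [ENNReal.toReal_mul, ENNReal.coe_toReal, coe_nnnorm, Real.norm_eq_abs,
          abs_of_nonneg hc]


end S17

open S17

/-- weak closedness of the constraint. If `u_k ⇀ u`, `z_k ⇀ z` weakly in
`L²(t₀,T)`, each `F'z_k` is absolutely continuous with `L²` derivative `ζ_k`, and
`sup_k ‖ζ_k + C'z_k − H'u_k‖_{L²} < ∞`, then `F'z` is (a.e. equal to) an absolutely
continuous function `φ` with `L²` derivative `ζ`, the derivatives converge weakly
`ζ_k ⇀ ζ`, and `F'z_k(t₀) → φ(t₀)` provided `F'z_k(T) → φ(T)`. -/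
theorem stmt17 {m n p : ℕ} (t₀ T : ℝ) (hT : t₀ < T)
    (F : Matrix (Fin m) (Fin n) ℝ)
    (C : ℝ → Matrix (Fin m) (Fin n) ℝ) (H : ℝ → Matrix (Fin p) (Fin n) ℝ)
    (hC : ContinuousOn C (Set.Icc t₀ T)) (hH : ContinuousOn H (Set.Icc t₀ T))
    (u : ℕ → ℝ → Fin p → ℝ) (z : ℕ → ℝ → Fin m → ℝ) (ζ : ℕ → ℝ → Fin n → ℝ)
    (ulim : ℝ → Fin p → ℝ) (zlim : ℝ → Fin m → ℝ)
    (huL : ∀ k, MemLp (u k) 2 (volume.restrict (Set.Icc t₀ T)))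
    (hzL : ∀ k, MemLp (z k) 2 (volume.restrict (Set.Icc t₀ T)))
    (hζL : ∀ k, MemLp (ζ k) 2 (volume.restrict (Set.Icc t₀ T)))
    (hulimL : MemLp ulim 2 (volume.restrict (Set.Icc t₀ T)))
    (hzlimL : MemLp zlim 2 (volume.restrict (Set.Icc t₀ T)))
    (huw : ∀ v : ℝ → Fin p → ℝ, MemLp v 2 (volume.restrict (Set.Icc t₀ T)) →
      Tendsto (fun k => ∫ t in t₀..T, u k t ⬝ᵥ v t) atTop (𝓝 (∫ t in t₀..T, ulim t ⬝ᵥ v t)))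
    (hzw : ∀ v : ℝ → Fin m → ℝ, MemLp v 2 (volume.restrict (Set.Icc t₀ T)) →
      Tendsto (fun k => ∫ t in t₀..T, z k t ⬝ᵥ v t) atTop (𝓝 (∫ t in t₀..T, zlim t ⬝ᵥ v t)))
    (hAC : ∀ k, ∀ t ∈ Set.Icc t₀ T,
      Fᵀ.mulVec (z k t) = Fᵀ.mulVec (z k t₀) + ∫ s in t₀..t, ζ k s)
    (hbdd : ∃ K : ℝ, ∀ k,
      (∫ t in t₀..T, (ζ k t + (C t)ᵀ.mulVec (z k t) - (H t)ᵀ.mulVec (u k t)) ⬝ᵥ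
          (ζ k t + (C t)ᵀ.mulVec (z k t) - (H t)ᵀ.mulVec (u k t))) ≤ K) :
    ∃ (φ : ℝ → Fin n → ℝ) (ζlim : ℝ → Fin n → ℝ),
      MemLp ζlim 2 (volume.restrict (Set.Icc t₀ T)) ∧
      (∀ t ∈ Set.Icc t₀ T, φ t = φ t₀ + ∫ s in t₀..t, ζlim s) ∧
      (∀ᵐ t ∂(volume.restrict (Set.Icc t₀ T)), φ t = Fᵀ.mulVec (zlim t)) ∧
      (∀ v : ℝ → Fin n → ℝ, MemLp v 2 (volume.restrict (Set.Icc t₀ T)) →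
        Tendsto (fun k => ∫ t in t₀..T, ζ k t ⬝ᵥ v t) atTop
          (𝓝 (∫ t in t₀..T, ζlim t ⬝ᵥ v t))) ∧
      (Tendsto (fun k => Fᵀ.mulVec (z k T)) atTop (𝓝 (φ T)) →
        Tendsto (fun k => Fᵀ.mulVec (z k t₀)) atTop (𝓝 (φ t₀))) := by
  have hT' : t₀ ≤ T := hT.le
  have ht₀I : t₀ ∈ Set.Icc t₀ T := Set.left_mem_Icc.mpr hT'
  have hTI : T ∈ Set.Icc t₀ T := Set.right_mem_Icc.mpr hT'
  -- component memℒp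
  have hζj : ∀ k j, MemLp (fun t => ζ k t j) 2 (volume.restrict (Set.Icc t₀ T)) :=
    fun k j => memℒp_component (hζL k) j
  -- projection of vector interval integrals
  have hproj : ∀ (k : ℕ) (j : Fin n) (t : ℝ), t ∈ Set.Icc t₀ T →
      (∫ s in t₀..t, ζ k s) j = ∫ s in t₀..t, ζ k s j := by
    intro k j t ht
    have := (ContinuousLinearMap.proj (R := ℝ) (φ := fun _ : Fin n => ℝ)
      j).intervalIntegral_comp_comm (intervalIntegrable_of_memℒp hT' (hζL k) ht₀I ht)
    exact this.symm
  -- the component of `Fᵀ z` as needed, via `hAC`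
  have hACj : ∀ (k : ℕ) (j : Fin n) (t : ℝ), t ∈ Set.Icc t₀ T →
      ∫ s in t₀..t, ζ k s j = Fᵀ.mulVec (z k t) j - Fᵀ.mulVec (z k t₀) j := by
    intro k j t ht
    have h1 := congrFun (hAC k t ht) j
    rw [Pi.add_apply] at h1
    rw [← hproj k j t ht]
    linarith
  -- Vector test functions built from scalar test functions and a fixed column
  have hcoltest : ∀ (g : ℝ → ℝ), IsTest t₀ T g → IsTest t₀ T (fun t => -deriv g t) := by
    intro g hg
    refine ⟨(contDiff_infty_iff_deriv.mp hg.1).2.neg, hg.2.1.deriv.comp_left (g := Neg.neg) neg_zero, ?_⟩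
    refine subset_trans (closure_minimal (fun x hx => ?_) (isClosed_closure)) hg.2.2
    have : deriv g x ≠ 0 := by
      intro h0
      exact hx (by simp [h0])
    exact support_deriv_subset this
  -- Main per-k identity: inner ℝ products against test functions as z-integrals
  have hAkey : ∀ (k : ℕ) (j : Fin n) (g : ℝ → ℝ) (hg : IsTest t₀ T g),
      (inner ℝ (MemLp.toLp _ (hζj k j)) (MemLp.toLp g hg.memℒp2) : ℝ)
        = ∫ t in t₀..T, z k t ⬝ᵥ ((-deriv g t) • (fun i => F i j)) := by
    intro k j g hg
    have hct : IsTest t₀ T (fun t => -deriv g t) := hcoltest g hg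
    rw [inner_toLp hT' (hζj k j) hg.memℒp2]
    rw [key_chain hT ((hζj k j).integrable one_le_two) hg]
    have hFz : MemLp (fun t => Fᵀ.mulVec (z k t) j) 2 (volume.restrict (Set.Icc t₀ T)) :=
      memℒp_mulVecT continuousOn_const (hzL k) j
    have step1 : ∫ t in t₀..T, (∫ s in t₀..t, ζ k s j) * (-deriv g t)
        = ∫ t in t₀..T, (Fᵀ.mulVec (z k t) j - Fᵀ.mulVec (z k t₀) j) * (-deriv g t) := by
      apply intervalIntegral.integral_congr
      intro t ht
      rw [Set.uIcc_of_le hT'] at ht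
      show (∫ s in t₀..t, ζ k s j) * (-deriv g t) = _
      rw [hACj k j t ht]
    have hc0 : ∫ t in t₀..T, -deriv g t = 0 := by
      rw [intervalIntegral.integral_neg, intervalIntegral.integral_deriv_eq_sub
        (fun x _ => (hg.1.differentiable (by simp)).differentiableAt)
        (((contDiff_infty_iff_deriv.mp hg.1).2.continuous).intervalIntegrable _ _)]
      have h1 : g T = 0 := image_eq_zero_of_notMem_tsupport
        (fun hmem => lt_irrefl T (hg.2.2 hmem).2)
      have h2 : g t₀ = 0 := image_eq_zero_of_notMem_tsupport
        (fun hmem => lt_irrefl t₀ (hg.2.2 hmem).1)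
      rw [h1, h2]; ring
    have step2 : ∫ t in t₀..T, (Fᵀ.mulVec (z k t) j - Fᵀ.mulVec (z k t₀) j) * (-deriv g t)
        = ∫ t in t₀..T, Fᵀ.mulVec (z k t) j * (-deriv g t) := by
      have hi1 : IntervalIntegrable (fun t => Fᵀ.mulVec (z k t) j * (-deriv g t)) volume t₀ T :=
        intervalIntegrable_mul2 hT' hFz hct.memℒp2
      have hi2 : IntervalIntegrable (fun t => Fᵀ.mulVec (z k t₀) j * (-deriv g t)) volume t₀ T :=
        (continuous_const.mul (contDiff_infty_iff_deriv.mp hg.1).2.continuous.neg).intervalIntegrable _ _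
      have hsplit : (fun t => (Fᵀ.mulVec (z k t) j - Fᵀ.mulVec (z k t₀) j) * (-deriv g t))
          = fun t => Fᵀ.mulVec (z k t) j * (-deriv g t)
            - Fᵀ.mulVec (z k t₀) j * (-deriv g t) := by
        funext t; ring
      rw [hsplit, intervalIntegral.integral_sub hi1 hi2]
      have h3 : ∫ t in t₀..T, Fᵀ.mulVec (z k t₀) j * (-deriv g t)
          = Fᵀ.mulVec (z k t₀) j * ∫ t in t₀..T, -deriv g t := by
        rw [← intervalIntegral.integral_const_mul]
      rw [h3, hc0, mul_zero, sub_zero]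
    rw [step1, step2]
    apply intervalIntegral.integral_congr
    intro t _
    show Fᵀ.mulVec (z k t) j * (-deriv g t) = z k t ⬝ᵥ ((-deriv g t) • fun i => F i j)
    rw [dotProduct_smul, smul_eq_mul, mul_comm]
    congr 1
    simp only [Matrix.mulVec, dotProduct, Matrix.transpose_apply]
    exact Finset.sum_congr rfl (fun i _ => mul_comm _ _)
  -- convergence of the inner ℝ products against the generating test functions
  have hconvS : ∀ j : Fin n, ∀ W ∈ {x : Lp ℝ 2 (volume.restrict (Set.Icc t₀ T)) |
      ∃ g : ℝ → ℝ, ∃ hg : IsTest t₀ T g, x = (IsTest.memℒp2 hg).toLp g},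
      ∃ L : ℝ, Tendsto (fun k => (inner ℝ (MemLp.toLp _ (hζj k j)) W : ℝ)) atTop (𝓝 L) := by
    rintro j W ⟨g, hg, rfl⟩
    have hct : IsTest t₀ T (fun t => -deriv g t) := hcoltest g hg
    have hv : MemLp (fun t => (-deriv g t) • (fun i => F i j)) 2
        (volume.restrict (Set.Icc t₀ T)) := memℒp_smul_const hct.memℒp2 _
    refine ⟨∫ t in t₀..T, zlim t ⬝ᵥ ((-deriv g t) • fun i => F i j), ?_⟩
    exact (hzw _ hv).congr (fun k => (hAkey k j g hg).symm)
  obtain ⟨K, hK⟩ := hbdd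
  have hCzj : ∀ k (j : Fin n), MemLp (fun t => (C t)ᵀ.mulVec (z k t) j) 2
      (volume.restrict (Set.Icc t₀ T)) := fun k j => memℒp_mulVecT hC (hzL k) j
  have hHuj : ∀ k (j : Fin n), MemLp (fun t => (H t)ᵀ.mulVec (u k t) j) 2
      (volume.restrict (Set.Icc t₀ T)) := fun k j => memℒp_mulVecT hH (huL k) j
  have hgkj : ∀ k (j : Fin n), MemLp (fun t =>
      (ζ k t + (C t)ᵀ.mulVec (z k t) - (H t)ᵀ.mulVec (u k t)) j) 2
      (volume.restrict (Set.Icc t₀ T)) := by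
    intro k j
    have h1 := ((hζj k j).add (hCzj k j)).sub (hHuj k j)
    apply h1.ae_eq
    apply Filter.Eventually.of_forall
    intro t
    simp only [Pi.add_apply, Pi.sub_apply]
  have hZdecomp : ∀ k j, MemLp.toLp _ (hζj k j)
      = MemLp.toLp _ (hgkj k j) - MemLp.toLp _ (hCzj k j) + MemLp.toLp _ (hHuj k j) := by
    intro k j
    rw [← MemLp.toLp_sub, ← MemLp.toLp_add]
    apply MemLp.toLp_congr
    apply Filter.Eventually.of_forall
    intro t
    simp only [Pi.add_apply, Pi.sub_apply]
    ring
  -- uniform bounds via Banach–Steinhaus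
  have hCzbd : ∀ j : Fin n, ∃ M : ℝ, ∀ k, ‖MemLp.toLp _ (hCzj k j)‖ ≤ M := by
    intro j
    apply exists_norm_bound
    intro V
    have hvmem : MemLp (fun t => (fun i => C t i j * (V : ℝ → ℝ) t)) 2
        (volume.restrict (Set.Icc t₀ T)) :=
      memℒp_pi (fun i => memℒp_entry_mul (continuousOn_matrix_elem hC i j) (Lp.memLp V))
    refine ⟨∫ t in t₀..T, zlim t ⬝ᵥ (fun i => C t i j * (V : ℝ → ℝ) t), ?_⟩
    refine (hzw _ hvmem).congr (fun k => ?_)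
    conv_rhs => rw [← Lp.toLp_coeFn V (Lp.memLp V)]
    rw [inner_toLp hT' (hCzj k j) (Lp.memLp V)]
    apply intervalIntegral.integral_congr
    intro t _
    show z k t ⬝ᵥ (fun i => C t i j * (V : ℝ → ℝ) t) = (C t)ᵀ.mulVec (z k t) j * (V : ℝ → ℝ) t
    simp only [dotProduct, Matrix.mulVec, Matrix.transpose_apply, Finset.sum_mul]
    exact Finset.sum_congr rfl (fun i _ => by ring)
  have hHubd : ∀ j : Fin n, ∃ M : ℝ, ∀ k, ‖MemLp.toLp _ (hHuj k j)‖ ≤ M := by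
    intro j
    apply exists_norm_bound
    intro V
    have hvmem : MemLp (fun t => (fun i => H t i j * (V : ℝ → ℝ) t)) 2
        (volume.restrict (Set.Icc t₀ T)) :=
      memℒp_pi (fun i => memℒp_entry_mul (continuousOn_matrix_elem hH i j) (Lp.memLp V))
    refine ⟨∫ t in t₀..T, ulim t ⬝ᵥ (fun i => H t i j * (V : ℝ → ℝ) t), ?_⟩
    refine (huw _ hvmem).congr (fun k => ?_)
    conv_rhs => rw [← Lp.toLp_coeFn V (Lp.memLp V)]
    rw [inner_toLp hT' (hHuj k j) (Lp.memLp V)]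
    apply intervalIntegral.integral_congr
    intro t _
    show u k t ⬝ᵥ (fun i => H t i j * (V : ℝ → ℝ) t) = (H t)ᵀ.mulVec (u k t) j * (V : ℝ → ℝ) t
    simp only [dotProduct, Matrix.mulVec, Matrix.transpose_apply, Finset.sum_mul]
    exact Finset.sum_congr rfl (fun i _ => by ring)
  have hgkbd : ∀ k (j : Fin n), ‖MemLp.toLp _ (hgkj k j)‖ ≤ Real.sqrt (max K 0) := by
    intro k j
    have hsq : ‖MemLp.toLp _ (hgkj k j)‖ ^ 2 = ∫ t in t₀..T,
        (ζ k t + (C t)ᵀ.mulVec (z k t) - (H t)ᵀ.mulVec (u k t)) j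
        * (ζ k t + (C t)ᵀ.mulVec (z k t) - (H t)ᵀ.mulVec (u k t)) j := by
      rw [← real_inner_self_eq_norm_sq, inner_toLp hT' (hgkj k j) (hgkj k j)]
    have hdot : ∫ t in t₀..T,
        (ζ k t + (C t)ᵀ.mulVec (z k t) - (H t)ᵀ.mulVec (u k t)) ⬝ᵥ
          (ζ k t + (C t)ᵀ.mulVec (z k t) - (H t)ᵀ.mulVec (u k t))
        = ∑ j' : Fin n, ∫ t in t₀..T,
            (ζ k t + (C t)ᵀ.mulVec (z k t) - (H t)ᵀ.mulVec (u k t)) j'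
            * (ζ k t + (C t)ᵀ.mulVec (z k t) - (H t)ᵀ.mulVec (u k t)) j' := by
      rw [← intervalIntegral.integral_finset_sum (fun j' _ =>
        intervalIntegrable_mul2 hT' (hgkj k j') (hgkj k j'))]
      apply intervalIntegral.integral_congr
      intro t _
      rfl
    have hle : ‖MemLp.toLp _ (hgkj k j)‖ ^ 2 ≤ K := by
      rw [hsq]
      have hsingle := Finset.single_le_sum (f := fun j' : Fin n => ∫ t in t₀..T,
            (ζ k t + (C t)ᵀ.mulVec (z k t) - (H t)ᵀ.mulVec (u k t)) j'
            * (ζ k t + (C t)ᵀ.mulVec (z k t) - (H t)ᵀ.mulVec (u k t)) j')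
        (fun j' _ => intervalIntegral.integral_nonneg hT' (fun t _ => mul_self_nonneg _))
        (Finset.mem_univ j)
      refine le_trans hsingle ?_
      rw [← hdot]
      exact hK k
    rw [← Real.sqrt_sq (norm_nonneg (MemLp.toLp _ (hgkj k j)))]
    exact Real.sqrt_le_sqrt (le_trans hle (le_max_left K 0))
  have hζbd : ∀ j : Fin n, ∃ M : ℝ, ∀ k, ‖MemLp.toLp _ (hζj k j)‖ ≤ M := by
    intro j
    obtain ⟨M1, hM1⟩ := hCzbd j
    obtain ⟨M2, hM2⟩ := hHubd j
    refine ⟨Real.sqrt (max K 0) + M1 + M2, fun k => ?_⟩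
    rw [hZdecomp k j]
    calc ‖MemLp.toLp _ (hgkj k j) - MemLp.toLp _ (hCzj k j) + MemLp.toLp _ (hHuj k j)‖
        ≤ ‖MemLp.toLp _ (hgkj k j) - MemLp.toLp _ (hCzj k j)‖ + ‖MemLp.toLp _ (hHuj k j)‖ :=
          norm_add_le _ _
      _ ≤ (‖MemLp.toLp _ (hgkj k j)‖ + ‖MemLp.toLp _ (hCzj k j)‖)
          + ‖MemLp.toLp _ (hHuj k j)‖ := by gcongr; exact norm_sub_le _ _
      _ ≤ Real.sqrt (max K 0) + M1 + M2 := by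
          gcongr
          · exact hgkbd k j
          · exact hM1 k
          · exact hM2 k
  -- the weak limits
  have hweak : ∀ j : Fin n, ∃ gl : Lp ℝ 2 (volume.restrict (Set.Icc t₀ T)),
      ∀ V, Tendsto (fun k => (inner ℝ (MemLp.toLp _ (hζj k j)) V : ℝ)) atTop
        (𝓝 (inner ℝ gl V)) := by
    intro j
    obtain ⟨M, hM⟩ := hζbd j
    exact weak_limit _ M hM _ (span_test_dense hT) (hconvS j)
  choose gl hgl using hweak
  -- identify the limit against test functions
  have hlim_test : ∀ (j : Fin n) (g : ℝ → ℝ) (hg : IsTest t₀ T g),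
      ∫ t in t₀..T, (∫ s in t₀..t, (gl j : ℝ → ℝ) s) * (-deriv g t)
        = ∫ t in t₀..T, Fᵀ.mulVec (zlim t) j * (-deriv g t) := by
    intro j g hg
    have hct : IsTest t₀ T (fun t => -deriv g t) := hcoltest g hg
    have hv : MemLp (fun t => (-deriv g t) • (fun i => F i j)) 2
        (volume.restrict (Set.Icc t₀ T)) := memℒp_smul_const hct.memℒp2 _
    have h1 := hgl j (MemLp.toLp g hg.memℒp2)
    have h2 : Tendsto (fun k => (inner ℝ (MemLp.toLp _ (hζj k j))
        (MemLp.toLp g hg.memℒp2) : ℝ)) atTop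
        (𝓝 (∫ t in t₀..T, zlim t ⬝ᵥ ((-deriv g t) • fun i => F i j))) :=
      (hzw _ hv).congr (fun k => (hAkey k j g hg).symm)
    have huniq : (inner ℝ (gl j) (MemLp.toLp g hg.memℒp2) : ℝ)
        = ∫ t in t₀..T, zlim t ⬝ᵥ ((-deriv g t) • fun i => F i j) :=
      tendsto_nhds_unique h1 h2
    have hLHS : (inner ℝ (gl j) (MemLp.toLp g hg.memℒp2) : ℝ)
        = ∫ t in t₀..T, (∫ s in t₀..t, (gl j : ℝ → ℝ) s) * (-deriv g t) := by
      conv_lhs => rw [← Lp.toLp_coeFn (gl j) (Lp.memLp _)]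
      rw [inner_toLp hT' (Lp.memLp _) hg.memℒp2]
      exact key_chain hT ((Lp.memLp (gl j)).integrable one_le_two) hg
    have hRHS : ∫ t in t₀..T, zlim t ⬝ᵥ ((-deriv g t) • fun i => F i j)
        = ∫ t in t₀..T, Fᵀ.mulVec (zlim t) j * (-deriv g t) := by
      apply intervalIntegral.integral_congr
      intro t _
      show zlim t ⬝ᵥ ((-deriv g t) • fun i => F i j) = Fᵀ.mulVec (zlim t) j * (-deriv g t)
      rw [dotProduct_smul, smul_eq_mul, mul_comm]
      congr 1
      simp only [Matrix.mulVec, dotProduct, Matrix.transpose_apply]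
      exact Finset.sum_congr rfl (fun i _ => mul_comm _ _)
    rw [← hLHS, huniq, hRHS]
  -- continuity of the primitives
  have hGcont : ∀ j : Fin n, ContinuousOn (fun t => ∫ s in t₀..t, (gl j : ℝ → ℝ) s)
      (Set.Icc t₀ T) := by
    intro j
    have h1 : IntegrableOn (⇑(gl j)) (Set.Icc t₀ T) volume :=
      (Lp.memLp (gl j)).integrable one_le_two
    refine ContinuousOn.congr (intervalIntegral.continuousOn_primitive (μ := volume) h1) ?_
    intro t ht
    show (∫ s in t₀..t, (gl j : ℝ → ℝ) s) = ∫ s in Set.Ioc t₀ t, (gl j : ℝ → ℝ) s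
    rw [intervalIntegral.integral_of_le ht.1]
  -- a.e. constancy of the difference
  have hconst : ∀ j : Fin n, ∃ cst : ℝ, ∀ᵐ t ∂(volume.restrict (Set.Icc t₀ T)),
      Fᵀ.mulVec (zlim t) j - (∫ s in t₀..t, (gl j : ℝ → ℝ) s) = cst := by
    intro j
    have hFzlim : MemLp (fun t => Fᵀ.mulVec (zlim t) j) 2
        (volume.restrict (Set.Icc t₀ T)) := memℒp_mulVecT continuousOn_const hzlimL j
    apply eq_const_of_integral_deriv_eq_zero hT
    · exact (hFzlim.integrable one_le_two).sub ((hGcont j).integrableOn_Icc)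
    · intro g hg
      rw [← intInt_eq hT']
      have hct : IsTest t₀ T (fun t => -deriv g t) := hcoltest g hg
      have hsplit : (fun t => (Fᵀ.mulVec (zlim t) j
            - ∫ s in t₀..t, (gl j : ℝ → ℝ) s) * deriv g t)
          = fun t => (∫ s in t₀..t, (gl j : ℝ → ℝ) s) * (-deriv g t)
            - Fᵀ.mulVec (zlim t) j * (-deriv g t) := by
        funext t; ring
      have hi1 : IntervalIntegrable (fun t => (∫ s in t₀..t, (gl j : ℝ → ℝ) s)
          * (-deriv g t)) volume t₀ T := by
        have hcc : ContinuousOn (fun t => (∫ s in t₀..t, (gl j : ℝ → ℝ) s) * (-deriv g t))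
            (Set.Icc t₀ T) := (hGcont j).mul
          ((contDiff_infty_iff_deriv.mp hg.1).2.continuous.neg.continuousOn)
        have h2 := hcc.integrableOn_Icc (μ := volume)
        exact (by rwa [Set.uIcc_of_le hT'] :
          IntegrableOn _ (Set.uIcc t₀ T) volume).intervalIntegrable
      have hi2 : IntervalIntegrable (fun t => Fᵀ.mulVec (zlim t) j * (-deriv g t))
          volume t₀ T := intervalIntegrable_mul2 hT' hFzlim hct.memℒp2
      rw [hsplit, intervalIntegral.integral_sub hi1 hi2, hlim_test j g hg, sub_self]
  choose cvec hcvec using hconst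
  refine ⟨fun t => (fun j => cvec j + ∫ s in t₀..t, (gl j : ℝ → ℝ) s),
    fun t => (fun j => (gl j : ℝ → ℝ) t), ?_, ?_, ?_, ?_, ?_⟩
  · -- MemLp of ζlim
    exact memℒp_pi (fun j => Lp.memLp (gl j))
  · -- absolute continuity identity
    intro t ht
    funext j
    have hproj2 : (∫ s in t₀..t, (fun j' => (gl j' : ℝ → ℝ) s : Fin n → ℝ)) j
        = ∫ s in t₀..t, (gl j : ℝ → ℝ) s := by
      have := (ContinuousLinearMap.proj (R := ℝ) (φ := fun _ : Fin n => ℝ)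
        j).intervalIntegral_comp_comm (intervalIntegrable_of_memℒp hT'
          (memℒp_pi (fun j' => Lp.memLp (gl j'))) ht₀I ht)
      exact this.symm
    show cvec j + ∫ s in t₀..t, (gl j : ℝ → ℝ) s = _
    rw [Pi.add_apply, hproj2]
    show _ = (cvec j + ∫ s in t₀..t₀, (gl j : ℝ → ℝ) s) + ∫ s in t₀..t, (gl j : ℝ → ℝ) s
    rw [intervalIntegral.integral_same, add_zero]
  · -- a.e. identification with Fᵀ zlim
    have hae : ∀ᵐ t ∂(volume.restrict (Set.Icc t₀ T)), ∀ j : Fin n,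
        Fᵀ.mulVec (zlim t) j - (∫ s in t₀..t, (gl j : ℝ → ℝ) s) = cvec j :=
      ae_all_iff.mpr (fun j => hcvec j)
    filter_upwards [hae] with t h
    funext j
    have := h j
    show cvec j + ∫ s in t₀..t, (gl j : ℝ → ℝ) s = Fᵀ.mulVec (zlim t) j
    linarith
  · -- weak convergence of the derivatives
    intro v hv
    have hvj : ∀ j : Fin n, MemLp (fun t => v t j) 2 (volume.restrict (Set.Icc t₀ T)) :=
      fun j => memℒp_component hv j
    have hsum : ∀ (f : ℝ → Fin n → ℝ), (∀ j, MemLp (fun t => f t j) 2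
        (volume.restrict (Set.Icc t₀ T))) →
        ∫ t in t₀..T, f t ⬝ᵥ v t = ∑ j : Fin n, ∫ t in t₀..T, f t j * v t j := by
      intro f hf
      rw [← intervalIntegral.integral_finset_sum (fun j _ =>
        intervalIntegrable_mul2 hT' (hf j) (hvj j))]
      apply intervalIntegral.integral_congr
      intro t _
      rfl
    have hterm : ∀ j : Fin n, Tendsto (fun k => ∫ t in t₀..T, ζ k t j * v t j) atTop
        (𝓝 (∫ t in t₀..T, (gl j : ℝ → ℝ) t * v t j)) := by
      intro j
      have h0 := hgl j (MemLp.toLp _ (hvj j))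
      have e2 : (inner ℝ (gl j) (MemLp.toLp _ (hvj j)) : ℝ)
          = ∫ t in t₀..T, (gl j : ℝ → ℝ) t * v t j := by
        conv_lhs => rw [← Lp.toLp_coeFn (gl j) (Lp.memLp _)]
        exact inner_toLp hT' (Lp.memLp _) (hvj j)
      rw [← e2]
      exact h0.congr (fun k => inner_toLp hT' (hζj k j) (hvj j))
    have hfin := tendsto_finset_sum Finset.univ (fun j (_ : j ∈ Finset.univ) => hterm j)
    have hgoal : ∫ t in t₀..T, (fun t => (fun j => (gl j : ℝ → ℝ) t : Fin n → ℝ)) t ⬝ᵥ v t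
        = ∑ j : Fin n, ∫ t in t₀..T, (gl j : ℝ → ℝ) t * v t j :=
      hsum _ (fun j => Lp.memLp (gl j))
    rw [hgoal]
    exact hfin.congr (fun k => (hsum (ζ k) (fun j => hζj k j)).symm)
  · -- convergence of initial values
    intro hcv
    rw [tendsto_pi_nhds]
    intro j
    have hACT : ∀ k, Fᵀ.mulVec (z k t₀) j
        = Fᵀ.mulVec (z k T) j - ∫ s in t₀..T, ζ k s j := by
      intro k
      have := hACj k j T hTI
      linarith
    have hone : MemLp (fun _ : ℝ => (1:ℝ)) 2 (volume.restrict (Set.Icc t₀ T)) :=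
      memLp_const 1
    have hconv1 : Tendsto (fun k => ∫ s in t₀..T, ζ k s j) atTop
        (𝓝 (∫ s in t₀..T, (gl j : ℝ → ℝ) s)) := by
      have h0 := hgl j (MemLp.toLp _ hone)
      have e2 : (inner ℝ (gl j) (MemLp.toLp _ hone) : ℝ)
          = ∫ s in t₀..T, (gl j : ℝ → ℝ) s := by
        conv_lhs => rw [← Lp.toLp_coeFn (gl j) (Lp.memLp _)]
        rw [inner_toLp hT' (Lp.memLp _) hone]
        simp
      rw [← e2]
      refine h0.congr (fun k => ?_)
      rw [inner_toLp hT' (hζj k j) hone]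
      simp
    have hTj := (tendsto_pi_nhds.mp hcv) j
    have hcomb := hTj.sub hconv1
    have heq : (cvec j + ∫ s in t₀..T, (gl j : ℝ → ℝ) s)
        - (∫ s in t₀..T, (gl j : ℝ → ℝ) s)
        = cvec j + ∫ s in t₀..t₀, (gl j : ℝ → ℝ) s := by
      rw [intervalIntegral.integral_same]; ring
    rw [heq] at hcomb
    exact hcomb.congr (fun k => (hACT k).symm)
end
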